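/- arXiv:0811.0056 — 3 statements merged into one kernel-verified Lean document; each statement's English description precedes it below -/
import Mathlib

section
/- There exists a bounded linear operator S̃ on ℓ²(X×ℤ) such that S̃ e_{(x,n)} = (ℒ(1)(x))^{-1/2} Σ_{y ∈ T⁻¹({x})} e_{(y,n+1)} for every (x,n) ∈ X×ℤ, and any such operator S̃ is an isometry, i.e. S̃*S̃ = 1. -/
open Classical

noncomputable section

/-- `ℓ²(X×ℤ)`: the Hilbert space of square-summable complex families indexed by `X × ℤ`. -/
abbrev l2Z (X : Type*) : Type _ := lp (fun _ : X × ℤ => ℂ) 2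

/-- The orthonormal basis vector `e_{(x,n)}` of `ℓ²(X×ℤ)`. -/
def e {X : Type*} (p : X × ℤ) : l2Z X := lp.single 2 p 1

end

section aux

variable {X : Type*}

open scoped InnerProductSpace

lemma e_apply (p q : X × ℤ) : (e p : ∀ _ : X × ℤ, ℂ) q = if q = p then 1 else 0 := by
  classical
  rw [e, lp.single_apply]
  split_ifs with h
  · subst h; simp
  · simp [h]

lemma inner_e_left (p : X × ℤ) (f : l2Z X) : ⟪e p, f⟫_ℂ = f p := by
  classical
  rw [e, lp.inner_single_left]
  simp

lemma inner_e_e (p q : X × ℤ) : ⟪e p, e q⟫_ℂ = if p = q then 1 else 0 := by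
  rw [inner_e_left, e_apply]

end aux

set_option maxHeartbeats 1000000 in
set_option synthInstance.maxHeartbeats 400000 in
open scoped InnerProductSpace in
open ContinuousLinearMap in
/-- Let `X` be a compact Hausdorff space and `T : X → X` a covering map.
There exists a bounded operator `S̃` on `ℓ²(X×ℤ)` such that
`S̃ e_{(x,n)} = (ℒ(1)(x))^{-1/2} ∑_{y ∈ T⁻¹({x})} e_{(y,n+1)}` for every `(x,n)`, and any
such operator is an isometry: `S̃* S̃ = 1`. -/
theorem exists_isometry_S_tilde {X : Type*} [TopologicalSpace X] [CompactSpace X]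
    [T2Space X] (T : X → X) (hT : IsCoveringMap T) (hTsurj : Function.Surjective T) :
    (∃ St : l2Z X →L[ℂ] l2Z X, ∀ (x : X) (n : ℤ),
        St (e (x, n)) = (((Real.sqrt (Nat.card (T ⁻¹' {x})))⁻¹ : ℝ) : ℂ) •
          ∑ᶠ y ∈ T ⁻¹' {x}, e (y, n + 1)) ∧
    ∀ St : l2Z X →L[ℂ] l2Z X,
      (∀ (x : X) (n : ℤ), St (e (x, n)) = (((Real.sqrt (Nat.card (T ⁻¹' {x})))⁻¹ : ℝ) : ℂ) •
          ∑ᶠ y ∈ T ⁻¹' {x}, e (y, n + 1)) →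
      (adjoint St) ∘L St = 1 := by
  classical
  letI : Fact ((1:ENNReal) ≤ 2) := ⟨one_le_two⟩
  have hTcont : Continuous T := hT.continuous
  -- fibers are finite
  have hfin : ∀ x : X, (T ⁻¹' {x}).Finite := by
    intro x
    haveI : DiscreteTopology (T ⁻¹' {x}) := (hT x).1
    have hclosed : IsClosed (T ⁻¹' {x}) := (isClosed_singleton).preimage hTcont
    exact hclosed.isCompact.finite (isDiscrete_iff_discreteTopology.mpr ‹_›)
  have hpos : ∀ x : X, 0 < Nat.card (T ⁻¹' {x}) := by
    intro x
    haveI : Finite (T ⁻¹' {x}) := (hfin x).to_subtype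
    obtain ⟨y, hy⟩ := hTsurj x
    haveI : Nonempty (T ⁻¹' {x}) := ⟨⟨y, hy⟩⟩
    exact Nat.card_pos
  set c : X → ℂ := fun x => (((Real.sqrt (Nat.card (T ⁻¹' {x})))⁻¹ : ℝ) : ℂ) with hc
  set w : X × ℤ → l2Z X := fun p => c p.1 • ∑ y ∈ (hfin p.1).toFinset, e (y, p.2 + 1) with hw
  -- rewrite the finsum
  have hfinsum : ∀ (x : X) (n : ℤ),
      (∑ᶠ y ∈ T ⁻¹' {x}, e (y, n + 1)) = ∑ y ∈ (hfin x).toFinset, e (y, n + 1) := by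
    intro x n
    exact finsum_mem_eq_finite_toFinset_sum _ (hfin x)
  have hcard : ∀ x : X, ((hfin x).toFinset.card : ℝ) = (Nat.card (T ⁻¹' {x}) : ℝ) := by
    intro x
    rw [Nat.card_coe_set_eq, Set.ncard_eq_toFinset_card _ (hfin x)]
  -- inner products of the w's
  have hinner : ∀ p q : X × ℤ, ⟪w p, w q⟫_ℂ = if p = q then 1 else 0 := by
    intro p q
    rw [hw]
    simp only [inner_smul_left, inner_smul_right]
    rw [sum_inner]
    simp only [inner_sum, inner_e_e]
    by_cases hpq : p = q
    · subst hpq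
      have : ∀ y ∈ (hfin p.1).toFinset,
          (∑ y' ∈ (hfin p.1).toFinset, if ((y:X), p.2+1) = (y', p.2+1) then (1:ℂ) else 0) = 1 := by
        intro y hy
        rw [Finset.sum_eq_single y]
        · simp
        · intro y' hy' hne
          simp [Prod.ext_iff, hne.symm]
        · intro h; exact absurd hy h
      rw [Finset.sum_congr rfl this, Finset.sum_const, if_pos rfl]
      have hN : (0:ℝ) < (Nat.card (T ⁻¹' {p.1}) : ℝ) := by exact_mod_cast hpos p.1
      have hs : Real.sqrt (Nat.card (T ⁻¹' {p.1})) * Real.sqrt (Nat.card (T ⁻¹' {p.1}))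
          = (Nat.card (T ⁻¹' {p.1}) : ℝ) := Real.mul_self_sqrt hN.le
      have hsne : Real.sqrt (Nat.card (T ⁻¹' {p.1})) ≠ 0 := (Real.sqrt_pos.2 hN).ne'
      have hR : (Real.sqrt (Nat.card (T ⁻¹' {p.1})))⁻¹ *
          ((Real.sqrt (Nat.card (T ⁻¹' {p.1})))⁻¹ * (((hfin p.1).toFinset.card : ℕ) : ℝ)) = 1 := by
        rw [hcard p.1, ← hs]
        field_simp
        rw [Real.sqrt_sq (Real.sqrt_nonneg _)]
      simp only [hc, nsmul_eq_mul, mul_one, Complex.conj_ofReal]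
      exact_mod_cast hR
    · rw [if_neg hpq]
      have : ∀ y ∈ (hfin p.1).toFinset,
          (∑ y' ∈ (hfin q.1).toFinset, if ((y:X), p.2+1) = (y', q.2+1) then (1:ℂ) else 0) = 0 := by
        intro y hy
        refine Finset.sum_eq_zero fun y' hy' => ?_
        rw [if_neg]
        intro h
        simp only [Prod.mk.injEq] at h
        obtain ⟨h1, h2⟩ := h
        apply hpq
        have hy1 : T y = p.1 := (hfin p.1).mem_toFinset.1 hy
        have hy2 : T y' = q.1 := (hfin q.1).mem_toFinset.1 hy'
        have : p.1 = q.1 := by rw [← hy1, h1, hy2]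
        exact Prod.ext this (by omega)
      rw [Finset.sum_congr rfl this, Finset.sum_const, smul_zero, mul_zero, mul_zero]
  have hwo : Orthonormal ℂ w := by
    rw [orthonormal_iff_ite]
    intro p q
    rw [hinner]
  -- the extension of p ↦ w p to a bounded operator
  have key : ∀ (St : l2Z X →L[ℂ] l2Z X), (∀ p : X × ℤ, St (e p) = w p) →
      (adjoint St) ∘L St = 1 := by
    intro St hSt
    refine ContinuousLinearMap.ext fun f => ?_
    have h1 : ∀ p : X × ℤ, ((adjoint St) ∘L St) (e p) = e p := by
      intro p
      apply lp.ext
      funext q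
      have : (((adjoint St) ∘L St) (e p) : ∀ _ : X × ℤ, ℂ) q = ⟪e q, ((adjoint St) ∘L St) (e p)⟫_ℂ :=
        (inner_e_left q _).symm
      rw [this, comp_apply, adjoint_inner_right, hSt, hSt, hinner, ← inner_e_e, inner_e_left]
    have h2 : HasSum (fun p : X × ℤ => lp.single 2 p (f p)) f :=
      lp.hasSum_single (by norm_num) f
    have h3 : HasSum (fun p : X × ℤ => ((adjoint St) ∘L St) (lp.single 2 p (f p)))
        (((adjoint St) ∘L St) f) := h2.mapL _
    have h4 : (fun p : X × ℤ => ((adjoint St) ∘L St) (lp.single 2 p (f p)))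
        = fun p : X × ℤ => lp.single 2 p (f p) := by
      funext p
      have : lp.single (E := fun _ : X × ℤ => ℂ) 2 p (f p) = (f p) • e p := by
        rw [e, ← lp.single_smul, smul_eq_mul, mul_one]
      rw [this, map_smul, h1]
    rw [h4] at h3
    rw [ContinuousLinearMap.one_apply]
    exact (h2.unique h3).symm
  constructor
  · -- existence
    refine ⟨(hwo.orthogonalFamily.linearIsometry).toContinuousLinearMap, fun x n => ?_⟩
    have : (hwo.orthogonalFamily.linearIsometry) (lp.single 2 (x, n) 1) = w (x, n) := by
      rw [hwo.orthogonalFamily.linearIsometry_apply_single]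
      simp [LinearIsometry.toSpanSingleton]
    rw [LinearIsometry.coe_toContinuousLinearMap]
    rw [e, this, hfinsum, hw]
  · intro St hSt
    apply key
    rintro ⟨x, n⟩
    rw [hSt, hfinsum, hw]
end

section
/- For every complex number z with |z| = 1 there exists a unitary operator U_z on ℓ²(X×ℤ) such that U_z e_{(x,n)} = zⁿ e_{(x,n)} for all (x,n) ∈ X×ℤ; moreover U_z M̃_f U_z* = M̃_f for every continuous f : X → ℂ, and U_z S̃ U_z* = z·S̃. -/
set_option synthInstance.maxHeartbeats 1000000
set_option maxHeartbeats 1000000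


open Classical

section Aux

variable {X : Type*}

noncomputable def mulOp (w : X × ℤ → ℂ) (hw : ∀ p, ‖w p‖ = 1) : l2Z X →L[ℂ] l2Z X := by
  refine LinearMap.mkContinuous
    { toFun := fun f => ⟨fun p => w p * f p, ?_⟩
      map_add' := fun f g => lp.ext (funext fun p => by
        simp only [lp.coeFn_add, Pi.add_apply, mul_add])
      map_smul' := fun c f => lp.ext (funext fun p => by
        simp only [lp.coeFn_smul, Pi.smul_apply, smul_eq_mul, RingHom.id_apply]; ring) } 1 (fun f => ?_)
  · apply memℓp_gen
    have h2 : (0:ℝ) < (2 : ENNReal).toReal := by norm_num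
    have := (lp.memℓp f).summable h2
    refine this.congr fun p => ?_
    simp [norm_mul, hw p]
  · have h2 : (0:ℝ) < (2 : ENNReal).toReal := by norm_num
    rw [one_mul]
    apply le_of_eq
    rw [lp.norm_eq_tsum_rpow h2, lp.norm_eq_tsum_rpow h2]
    congr 1
    refine tsum_congr fun p => ?_
    simp [norm_mul, hw p]

@[simp] lemma mulOp_apply (w : X × ℤ → ℂ) (hw : ∀ p, ‖w p‖ = 1) (f : l2Z X) (p : X × ℤ) :
    (mulOp w hw f) p = w p * f p := rfl

lemma mulOp_single (w : X × ℤ → ℂ) (hw : ∀ p, ‖w p‖ = 1) (p : X × ℤ) :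
    mulOp w hw (e p) = w p • e p := by
  apply lp.ext
  funext q
  by_cases h : q = p
  · subst h
    simp [e, lp.single_apply_self, smul_eq_mul]
  · simp [e, lp.single_apply_ne _ _ _ h, smul_eq_mul, Pi.single_apply, h]

lemma dense_span_e : Dense (↑(Submodule.span ℂ (Set.range (e (X := X)))) : Set (l2Z X)) := by
  rw [Submodule.dense_iff_topologicalClosure_eq_top]
  have h : (Submodule.span ℂ (Set.range (e (X := X)))).topologicalClosure = ⊤ := by
    rw [Submodule.topologicalClosure_eq_top_iff]
    rw [Submodule.eq_bot_iff]
    intro f hf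
    apply lp.ext
    funext p
    have h1 : e p ∈ Submodule.span ℂ (Set.range (e (X := X))) :=
      Submodule.subset_span ⟨p, rfl⟩
    have h2 := (Submodule.mem_orthogonal _ f).mp hf (e p) h1
    rw [e, lp.inner_single_left] at h2
    simpa using h2
  exact h

end Aux

open ContinuousLinearMap in
/-- Let `X` be a compact Hausdorff space, `T : X → X` a covering map and
`S̃` the bounded operator on `ℓ²(X×ℤ)` with
`S̃ e_{(x,n)} = (ℒ(1)(x))^{-1/2} ∑_{y ∈ T⁻¹({x})} e_{(y,n+1)}`. For every `z ∈ ℂ` with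
`|z| = 1` there is a unitary `U_z` on `ℓ²(X×ℤ)` with `U_z e_{(x,n)} = zⁿ e_{(x,n)}`;
moreover `U_z M̃_f U_z* = M̃_f` for every continuous `f : X → ℂ`, and
`U_z S̃ U_z* = z·S̃`. -/
theorem exists_gauge_unitary {X : Type*} [TopologicalSpace X] [CompactSpace X] [T2Space X]
    (T : X → X) (hT : IsCoveringMap T) (hTsurj : Function.Surjective T)
    (St : l2Z X →L[ℂ] l2Z X)
    (hSt : ∀ (x : X) (n : ℤ), St (e (x, n)) =
      (((Real.sqrt (Nat.card (T ⁻¹' {x})))⁻¹ : ℝ) : ℂ) • ∑ᶠ y ∈ T ⁻¹' {x}, e (y, n + 1)) :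
    ∀ z : ℂ, ‖z‖ = 1 →
      ∃ U : l2Z X →L[ℂ] l2Z X,
        ((adjoint U) ∘L U = 1 ∧ U ∘L (adjoint U) = 1) ∧
        (∀ p : X × ℤ, U (e p) = (z ^ p.2) • e p) ∧
        (∀ f : C(X, ℂ), ∀ Mf : l2Z X →L[ℂ] l2Z X,
          (∀ p : X × ℤ, Mf (e p) = f p.1 • e p) → U ∘L Mf ∘L (adjoint U) = Mf) ∧
        U ∘L St ∘L (adjoint U) = z • St := by
  intro z hz
  have hz0 : z ≠ 0 := by
    intro h; rw [h] at hz; simp at hz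
  have hcz : (starRingEnd ℂ) z * z = 1 := by
    rw [mul_comm, Complex.mul_conj]
    norm_cast
    rw [Complex.normSq_eq_norm_sq, hz, one_pow]
  have hwU : ∀ p : X × ℤ, ‖z ^ p.2‖ = 1 := fun p => by
    rw [norm_zpow, hz, one_zpow]
  have hwV : ∀ p : X × ℤ, ‖((starRingEnd ℂ) z) ^ p.2‖ = 1 := fun p => by
    rw [norm_zpow, RCLike.norm_conj, hz, one_zpow]
  set U : l2Z X →L[ℂ] l2Z X := mulOp (fun p => z ^ p.2) hwU with hU
  set V : l2Z X →L[ℂ] l2Z X := mulOp (fun p => ((starRingEnd ℂ) z) ^ p.2) hwV with hV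
  -- adjoint of U is V
  have hadj : adjoint U = V := by
    symm
    rw [eq_adjoint_iff]
    intro f g
    rw [lp.inner_eq_tsum, lp.inner_eq_tsum]
    refine tsum_congr fun p => ?_
    simp only [mulOp_apply, RCLike.inner_apply, map_mul, hV, hU]
    rw [← map_zpow₀, Complex.conj_conj]
    ring
  -- the key cancellation
  have hmulone : ∀ n : ℤ, ((starRingEnd ℂ) z) ^ n * z ^ n = 1 := fun n => by
    rw [← mul_zpow, hcz, one_zpow]
  have hVU : ∀ f : l2Z X, V (U f) = f := fun f => by
    apply lp.ext
    funext p
    simp only [mulOp_apply, hU, hV]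
    rw [← mul_assoc, hmulone]
    simp
  have hUV : ∀ f : l2Z X, U (V f) = f := fun f => by
    apply lp.ext
    funext p
    simp only [mulOp_apply, hU, hV]
    rw [← mul_assoc, mul_comm (z ^ p.2), hmulone]
    simp
  refine ⟨U, ⟨?_, ?_⟩, ?_, ?_, ?_⟩
  · rw [hadj]
    refine ContinuousLinearMap.ext fun f => ?_
    simpa only [ContinuousLinearMap.comp_apply, ContinuousLinearMap.one_apply] using hVU f
  · rw [hadj]
    refine ContinuousLinearMap.ext fun f => ?_
    simpa only [ContinuousLinearMap.comp_apply, ContinuousLinearMap.one_apply] using hUV f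
  · intro p; exact mulOp_single _ hwU p
  · intro f Mf hMf
    rw [hadj]
    refine ContinuousLinearMap.ext_on dense_span_e ?_
    rintro _ ⟨p, rfl⟩
    simp only [ContinuousLinearMap.comp_apply, mulOp_single _ hwV p, map_smul, hMf p,
      mulOp_single _ hwU p, hU, hV]
    simp only [smul_smul]
    rw [show (starRingEnd ℂ) z ^ p.2 * (f p.1 * z ^ p.2) = f p.1 from by
      rw [mul_comm (f p.1), ← mul_assoc, hmulone, one_mul]]
  · rw [hadj]
    refine ContinuousLinearMap.ext_on dense_span_e ?_
    rintro _ ⟨⟨x, n⟩, rfl⟩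
    have hfin : (T ⁻¹' {x}).Finite := by
      have hd : DiscreteTopology (T ⁻¹' {x}) := (hT x).1
      have hcl : IsClosed (T ⁻¹' {x}) := isClosed_singleton.preimage hT.continuous
      have hcp : IsCompact (T ⁻¹' {x}) := hcl.isCompact
      have h1 : CompactSpace (T ⁻¹' {x}) := isCompact_iff_compactSpace.mp hcp
      have h2 : Finite (T ⁻¹' {x}) := finite_of_compact_of_discrete
      exact Set.finite_coe_iff.mp h2
    have hF : (∑ᶠ y ∈ T ⁻¹' {x}, e (X := X) (y, n + 1)) =
        ∑ y ∈ hfin.toFinset, e (y, n + 1) :=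
      finsum_mem_eq_finite_toFinset_sum _ hfin
    have hUF : U (∑ᶠ y ∈ T ⁻¹' {x}, e (X := X) (y, n + 1)) =
        z ^ (n + 1) • ∑ᶠ y ∈ T ⁻¹' {x}, e (X := X) (y, n + 1) := by
      rw [hF, map_sum, Finset.smul_sum]
      refine Finset.sum_congr rfl fun y _ => ?_
      exact mulOp_single _ hwU (y, n + 1)
    simp only [ContinuousLinearMap.comp_apply, mulOp_single _ hwV (x, n), map_smul, hSt x n,
      hUF, ContinuousLinearMap.smul_apply, hV]
    simp only [smul_smul]
    rw [show ∀ c : ℂ, (starRingEnd ℂ) z ^ n * (c * z ^ (n + 1)) = z * c from fun c => by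
      rw [zpow_add_one₀ hz0, show (starRingEnd ℂ) z ^ n * (c * (z ^ n * z)) =
        (starRingEnd ℂ) z ^ n * z ^ n * (c * z) from by ring, hmulone n, one_mul, mul_comm]]
end

section
/- Let k, l be natural numbers, let U be an open subset of X such that T^k(x) = T^l(x) for every x ∈ U and such that the restrictions of T^k and T^l to U are injective, and let f : X → ℂ be a continuous function whose support is contained in U. Then the operator M̃_f S̃^k (S̃*)^l M̃_f commutes with M̃_h for every continuous function h : X → ℂ. -/
open Classical

open scoped InnerProductSpace

set_option maxHeartbeats 2000000 in
open ContinuousLinearMap in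
/-- Let `X` be a compact Hausdorff space, `T : X → X` a covering map and
`S̃` the bounded operator on `ℓ²(X×ℤ)` with
`S̃ e_{(x,n)} = (ℒ(1)(x))^{-1/2} ∑_{y ∈ T⁻¹({x})} e_{(y,n+1)}`. Let `k, l ∈ ℕ`, let `U` be
open with `T^k = T^l` on `U` and `T^k`, `T^l` injective on `U`, and let `f : X → ℂ` be
continuous with support contained in `U`. Then `M̃_f S̃^k (S̃*)^l M̃_f` commutes with
`M̃_h` for every continuous `h : X → ℂ`. -/
theorem MfSkSlMf_commutes_with_Mh {X : Type*} [TopologicalSpace X] [CompactSpace X]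
    [T2Space X] (T : X → X) (hT : IsCoveringMap T) (hTsurj : Function.Surjective T)
    (St : l2Z X →L[ℂ] l2Z X)
    (hSt : ∀ (x : X) (n : ℤ), St (e (x, n)) =
      (((Real.sqrt (Nat.card (T ⁻¹' {x})))⁻¹ : ℝ) : ℂ) • ∑ᶠ y ∈ T ⁻¹' {x}, e (y, n + 1))
    (k l : ℕ) (U : Set X) (hUopen : IsOpen U)
    (hU : ∀ x ∈ U, T^[k] x = T^[l] x)
    (hUinjk : Set.InjOn (T^[k]) U) (hUinjl : Set.InjOn (T^[l]) U)
    (f : C(X, ℂ)) (hf : tsupport f ⊆ U) :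
    ∀ h : C(X, ℂ), ∀ Mf Mh : l2Z X →L[ℂ] l2Z X,
      (∀ p : X × ℤ, Mf (e p) = f p.1 • e p) →
      (∀ p : X × ℤ, Mh (e p) = h p.1 • e p) →
      (Mf ∘L (St ^ k) ∘L ((adjoint St) ^ l) ∘L Mf) ∘L Mh =
        Mh ∘L (Mf ∘L (St ^ k) ∘L ((adjoint St) ^ l) ∘L Mf) := by
  intro h Mf Mh hMf hMh
  classical
  -- coordinates of basis vectors
  have e_apply : ∀ q r : X × ℤ, (e q : ∀ _ : X × ℤ, ℂ) r = if r = q then 1 else 0 := by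
    intro q r
    by_cases hrq : r = q
    · subst hrq; simp [e, lp.single_apply_self]
    · simp [e, lp.single_apply_ne 2 q _ hrq, hrq]
  have coord : ∀ (v : l2Z X) (q : X × ℤ), ⟪e q, v⟫_ℂ = v q := by
    intro v q
    rw [e, lp.inner_single_left, RCLike.inner_apply, map_one, mul_one]
  have ext2 : ∀ u v : l2Z X, (∀ q, u q = v q) → u = v := fun u v h' => lp.ext (funext h')
  -- fibers are finite
  have hfib : ∀ x : X, (T ⁻¹' {x}).Finite := by
    intro x
    have hd : DiscreteTopology (T ⁻¹' {x}) := (hT x).1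
    have hc : IsCompact (T ⁻¹' {x}) :=
      (isClosed_singleton.preimage hT.continuous).isCompact
    have : CompactSpace (T ⁻¹' {x}) := isCompact_iff_compactSpace.mp hc
    exact Set.finite_coe_iff.mp finite_of_compact_of_discrete
  set c : X → ℂ := fun x => (((Real.sqrt (Nat.card (T ⁻¹' {x})))⁻¹ : ℝ) : ℂ) with hc_def
  have hc0 : ∀ x, c x ≠ 0 := by
    intro x
    have hfin : Finite (T ⁻¹' {x}) := (hfib x).to_subtype
    have hne : Nonempty (T ⁻¹' {x}) := by
      obtain ⟨y, hy⟩ := hTsurj x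
      exact ⟨⟨y, hy⟩⟩
    have hpos : 0 < Nat.card (T ⁻¹' {x}) := Nat.card_pos
    have hs : 0 < Real.sqrt (Nat.card (T ⁻¹' {x})) :=
      Real.sqrt_pos.mpr (by exact_mod_cast hpos)
    simp only [hc_def, ne_eq, Complex.ofReal_eq_zero, inv_eq_zero]
    exact ne_of_gt hs
  have c_conj : ∀ x, (starRingEnd ℂ) (c x) = c x := by
    intro x; simp [hc_def, Complex.conj_ofReal]
  -- coordinates of `St` on basis vectors
  have St_coord : ∀ (q r : X × ℤ),
      (St (e q)) r = c q.1 * (if T r.1 = q.1 ∧ r.2 = q.2 + 1 then 1 else 0) := by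
    rintro ⟨x, n⟩ ⟨y, m⟩
    have hfin := hfib x
    have hsum : (∑ᶠ z ∈ T ⁻¹' {x}, (e (z, n + 1) : l2Z X)) = ∑ z ∈ hfin.toFinset, e (z, n + 1) := by
      rw [← finsum_mem_coe_finset, hfin.coe_toFinset]
    rw [hSt, hsum, lp.coeFn_smul, Pi.smul_apply, smul_eq_mul]
    congr 1
    rw [lp.coeFn_sum]
    simp only [Finset.sum_apply]
    simp only [e_apply, Prod.mk.injEq, Prod.ext_iff]
    by_cases h2 : m = n + 1
    · simp only [h2, and_true]
      rw [Finset.sum_ite_eq hfin.toFinset y (fun _ => (1 : ℂ))]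
      simp [hfin.mem_toFinset]
    · simp [h2]
  -- adjoint of St on basis vectors
  have adj_e : ∀ (x : X) (n : ℤ),
      ContinuousLinearMap.adjoint St (e (x, n)) = c (T x) • e (T x, n - 1) := by
    intro x n
    refine ext2 _ _ fun q => ?_
    rw [← coord, ContinuousLinearMap.adjoint_inner_right]
    rw [show (e (x, n) : l2Z X) = lp.single 2 (x, n) 1 from rfl, lp.inner_single_right,
      RCLike.inner_apply, one_mul]
    rw [St_coord q (x, n)]
    rw [lp.coeFn_smul, Pi.smul_apply, smul_eq_mul, e_apply]
    have hiff : (T x = q.1 ∧ n = q.2 + 1) ↔ q = (T x, n - 1) := by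
      constructor
      · rintro ⟨h1, h2⟩
        exact Prod.ext h1.symm (by omega)
      · rintro rfl
        exact ⟨rfl, by ring⟩
    by_cases hcnd : q = (T x, n - 1)
    · have := hiff.mpr hcnd
      rw [if_pos this, if_pos hcnd, mul_one, mul_one, c_conj, hcnd]
    · rw [if_neg (fun hh => hcnd (hiff.mp hh)), if_neg hcnd, mul_zero, mul_zero, map_zero]
  -- product of normalization constants
  set Cl : ℕ → X → ℂ := fun m x => ∏ j ∈ Finset.range m, c (T^[j + 1] x) with hCl
  have Cl_succ : ∀ (m : ℕ) (x : X), Cl (m + 1) x = c (T x) * Cl m (T x) := by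
    intro m x
    simp only [hCl]
    rw [Finset.prod_range_succ', mul_comm]
    congr 1
  -- powers of the adjoint on basis vectors
  have adj_pow : ∀ (m : ℕ) (x : X) (n : ℤ),
      ((ContinuousLinearMap.adjoint St) ^ m) (e (x, n)) = Cl m x • e (T^[m] x, n - m) := by
    intro m
    induction m with
    | zero =>
      intro x n
      simp [hCl]
    | succ m ih =>
      intro x n
      rw [pow_succ, ContinuousLinearMap.mul_apply, adj_e x n, map_smul, ih (T x) (n - 1)]
      have h1 : T^[m] (T x) = T^[m + 1] x := (Function.iterate_succ_apply T m x).symm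
      have h2 : n - 1 - (m : ℤ) = n - ((m + 1 : ℕ) : ℤ) := by push_cast; ring
      rw [smul_smul, ← Cl_succ, h1, h2]
  -- coordinates of multiplication operators
  have Madj : ∀ (g : C(X, ℂ)) (M : l2Z X →L[ℂ] l2Z X),
      (∀ p : X × ℤ, M (e p) = g p.1 • e p) →
      ∀ (v : l2Z X) (q : X × ℤ), (M v) q = g q.1 * v q := by
    intro g M hM v q
    have hadj : ContinuousLinearMap.adjoint M (e q) = (starRingEnd ℂ) (g q.1) • e q := by
      refine ext2 _ _ fun r => ?_
      rw [← coord, ContinuousLinearMap.adjoint_inner_right, hM, inner_smul_left, coord,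
        lp.coeFn_smul, Pi.smul_apply, smul_eq_mul, e_apply]
      by_cases hrq : r = q
      · subst hrq; simp
      · simp [hrq]
    rw [← coord, ← ContinuousLinearMap.adjoint_inner_left, hadj, inner_smul_left, coord,
      Complex.conj_conj]
  -- coordinates of powers of St on basis vectors
  have Stk_coord : ∀ (m : ℕ) (p q : X × ℤ),
      ((St ^ m) (e p)) q = (starRingEnd ℂ) (Cl m q.1) *
        (if (T^[m] q.1, q.2 - (m : ℤ)) = p then 1 else 0) := by
    intro m p q
    obtain ⟨qx, qn⟩ := q
    rw [← coord]
    have hadj : (ContinuousLinearMap.adjoint (St ^ m)) (e (qx, qn)) =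
        ((ContinuousLinearMap.adjoint St) ^ m) (e (qx, qn)) := by
      rw [← ContinuousLinearMap.star_eq_adjoint, ← ContinuousLinearMap.star_eq_adjoint, star_pow]
    rw [← ContinuousLinearMap.adjoint_inner_left, hadj, adj_pow, inner_smul_left, coord, e_apply]
  -- coordinates of the operator A = Mf St^k (St*)^l Mf
  have A_coord : ∀ p q : X × ℤ,
      (Mf ((St ^ k) (((ContinuousLinearMap.adjoint St) ^ l) (Mf (e p))))) q =
      f q.1 * f p.1 * (Cl l p.1 * (starRingEnd ℂ) (Cl k q.1)) *
        (if (T^[k] q.1, q.2 - (k : ℤ)) = (T^[l] p.1, p.2 - (l : ℤ)) then 1 else 0) := by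
    intro p q
    obtain ⟨px, pn⟩ := p
    rw [hMf]
    simp only [map_smul]
    rw [adj_pow l px pn]
    simp only [map_smul]
    simp only [lp.coeFn_smul, Pi.smul_apply, smul_eq_mul]
    rw [Madj f Mf hMf, Stk_coord]
    ring
  -- key: off-diagonal entries vanish unless q.1 = p.1
  have key : ∀ p q : X × ℤ,
      (Mf ((St ^ k) (((ContinuousLinearMap.adjoint St) ^ l) (Mf (e p))))) q ≠ 0 →
      q.1 = p.1 := by
    intro p q hne
    rw [A_coord] at hne
    have hfq : f q.1 ≠ 0 := by intro h0; apply hne; rw [h0]; ring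
    have hfp : f p.1 ≠ 0 := by intro h0; apply hne; rw [h0]; ring
    have hcond : (T^[k] q.1, q.2 - (k : ℤ)) = (T^[l] p.1, p.2 - (l : ℤ)) := by
      by_contra h0; apply hne; rw [if_neg h0]; ring
    have hpU : p.1 ∈ U := hf (subset_tsupport _ hfp)
    have hqU : q.1 ∈ U := hf (subset_tsupport _ hfq)
    have hTk : T^[k] q.1 = T^[k] p.1 := by
      have h1 : T^[k] q.1 = T^[l] p.1 := by
        have h2 := hcond
        rw [Prod.ext_iff] at h2
        exact h2.1
      rw [h1, ← hU p.1 hpU]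
    exact hUinjk hqU hpU hTk
  -- commutation on basis vectors
  have hbasis : ∀ p : X × ℤ,
      ((Mf ∘L (St ^ k) ∘L ((ContinuousLinearMap.adjoint St) ^ l) ∘L Mf) ∘L Mh) (e p) =
      (Mh ∘L (Mf ∘L (St ^ k) ∘L ((ContinuousLinearMap.adjoint St) ^ l) ∘L Mf)) (e p) := by
    intro p
    simp only [ContinuousLinearMap.comp_apply]
    rw [hMh]
    simp only [map_smul]
    refine ext2 _ _ fun q => ?_
    rw [lp.coeFn_smul, Pi.smul_apply, smul_eq_mul, Madj h Mh hMh]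
    by_cases h0 : (Mf ((St ^ k) (((ContinuousLinearMap.adjoint St) ^ l) (Mf (e p))))) q = 0
    · rw [h0]; ring
    · rw [key p q h0]
  -- extend to all of l2Z X by density
  refine ContinuousLinearMap.ext fun v => ?_
  have hv : HasSum (fun q : X × ℤ => lp.single 2 q (v q)) v :=
    lp.hasSum_single ENNReal.ofNat_ne_top v
  have hsingle : ∀ q : X × ℤ, lp.single 2 q (v q) = v q • e q := by
    intro q
    rw [e, ← lp.single_smul, smul_eq_mul, mul_one]
  simp only [hsingle] at hv
  have hL := hv.mapL ((Mf ∘L (St ^ k) ∘L ((ContinuousLinearMap.adjoint St) ^ l) ∘L Mf) ∘L Mh)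
  have hR := hv.mapL (Mh ∘L (Mf ∘L (St ^ k) ∘L ((ContinuousLinearMap.adjoint St) ^ l) ∘L Mf))
  refine hL.unique ?_
  have hfun : (fun q : X × ℤ =>
      ((Mf ∘L (St ^ k) ∘L ((ContinuousLinearMap.adjoint St) ^ l) ∘L Mf) ∘L Mh) (v q • e q)) =
      fun q : X × ℤ =>
      (Mh ∘L (Mf ∘L (St ^ k) ∘L ((ContinuousLinearMap.adjoint St) ^ l) ∘L Mf)) (v q • e q) := by
    funext q
    rw [map_smul, map_smul, hbasis q]
  rw [hfun]
  exact hR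
end
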